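/- arXiv:1702.00588 — 2 statements merged into one kernel-verified Lean document; each statement's English description precedes it below -/
import Mathlib

section
/- The Clebsch graph is triangle-free. That is, in the graph whose vertex set is the finite field GF(16) and in which two distinct elements are adjacent if and only if their difference is a nonzero perfect cube in GF(16), there do not exist three pairwise adjacent vertices. -/
open scoped Classical

lemma gf16_pow15 (z : GaloisField 2 4) (hz : z ≠ 0) : z ^ 15 = 1 := by
  have : Nat.card (GaloisField 2 4) = 2 ^ 4 := GaloisField.card 2 4 (by norm_num)
  have hF : Fintype (GaloisField 2 4) := Fintype.ofFinite _
  have hcard : Fintype.card (GaloisField 2 4) = 16 := by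
    rw [← Nat.card_eq_fintype_card]; simpa using this
  have := FiniteField.pow_card_sub_one_eq_one z hz
  rwa [hcard] at this

lemma gf16_key (t : GaloisField 2 4) (ht0 : t ≠ 0) (ht1 : t ≠ 1)
    (h1 : t ^ 5 = 1) (h2 : (1 + t) ^ 5 = 1) : False := by
  have htwo : (2 : GaloisField 2 4) = 0 := by
    have := CharP.cast_eq_zero (GaloisField 2 4) 2
    simpa using this
  have e1 : t ^ 4 + t = 1 := by
    linear_combination h2 - h1 + (-2*t^4 - 5*t^3 - 5*t^2 - 2*t - 1) * htwo
  have e2 : (t - 1) * (t ^ 4 + t ^ 3 + t ^ 2 + t + 1) = 0 := by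
    linear_combination h1
  have e3 : t ^ 4 + t ^ 3 + t ^ 2 + t + 1 = 0 := by
    rcases mul_eq_zero.mp e2 with h | h
    · exact absurd (sub_eq_zero.mp h) ht1
    · exact h
  have e4 : t ^ 2 * (t + 1) = 0 := by
    linear_combination e3 - e1 - htwo
  rcases mul_eq_zero.mp e4 with h | h
  · exact ht0 (pow_eq_zero_iff (by norm_num) |>.mp h)
  · exact ht1 (by linear_combination h - htwo)

/-- The Clebsch graph (vertices `GF(16)`, adjacency: difference is a nonzero cube)
is triangle-free. -/
theorem clebsch_triangle_free :
    ∀ a b c : GaloisField 2 4,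
      (a ≠ b ∧ ∃ z : GaloisField 2 4, z ≠ 0 ∧ a - b = z ^ 3) →
      (b ≠ c ∧ ∃ z : GaloisField 2 4, z ≠ 0 ∧ b - c = z ^ 3) →
      (a ≠ c ∧ ∃ z : GaloisField 2 4, z ≠ 0 ∧ a - c = z ^ 3) →
      False := by
  rintro a b c ⟨hab, z1, hz1, hx⟩ ⟨hbc, z2, hz2, hy⟩ ⟨hac, z3, hz3, hs⟩
  set x := z1 ^ 3 with hxdef
  set y := z2 ^ 3 with hydef
  have hx0 : x ≠ 0 := pow_ne_zero _ hz1
  have hy0 : y ≠ 0 := pow_ne_zero _ hz2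
  have hx5 : x ^ 5 = 1 := by rw [hxdef, ← pow_mul]; exact gf16_pow15 z1 hz1
  have hy5 : y ^ 5 = 1 := by rw [hydef, ← pow_mul]; exact gf16_pow15 z2 hz2
  have hsum : x + y = z3 ^ 3 := by
    rw [← hx, ← hy]; linear_combination hs
  have hs0 : x + y ≠ 0 := hsum ▸ pow_ne_zero _ hz3
  have hs5 : (x + y) ^ 5 = 1 := by rw [hsum, ← pow_mul]; exact gf16_pow15 z3 hz3
  set t := y / x with htdef
  have ht0 : t ≠ 0 := div_ne_zero hy0 hx0
  have ht5 : t ^ 5 = 1 := by rw [htdef, div_pow, hy5, hx5, div_one]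
  have hst : (1 + t) ^ 5 = 1 := by
    have : 1 + t = (x + y) / x := by
      rw [htdef, add_div, div_self hx0]
    rw [this, div_pow, hs5, hx5, div_one]
  have ht1 : t ≠ 1 := by
    intro h
    have htwo : (2 : GaloisField 2 4) = 0 := by
      have := CharP.cast_eq_zero (GaloisField 2 4) 2
      simpa using this
    have : (1 + t) = 0 := by rw [h]; linear_combination htwo
    rw [this] at hst
    simp at hst
  exact gf16_key t ht0 ht1 ht5 hst
end

section
/- Let G be a finite connected planar triangle-free simple graph with n ≥ 3 vertices admitting a proper 3-coloring. Then, in the notation of the previous two statements, max(c₁₂, c₂₃, c₁₃) ≥ (s⁺ + 8)/6, and consequently G has at least 2^{(s⁺+8)/6} distinct proper 3-colorings, where s⁺ = Σ_{i≥5} (i-4)sᵢ is computed from any plane embedding of G. -/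
open SimpleGraph


lemma card_le_comp_add_edges {W : Type*} [Finite W] (H : SimpleGraph W) :
    Nat.card W ≤ Nat.card H.ConnectedComponent + Nat.card H.edgeSet := by
  classical
  set root : W → W := fun v => (H.connectedComponentMk v).out with hroot
  have hrootmk : ∀ v, H.connectedComponentMk (root v) = H.connectedComponentMk v := by
    intro v; exact Quot.out_eq _
  have hreach : ∀ v, H.Reachable v (root v) := fun v =>
    (ConnectedComponent.eq.mp (hrootmk v)).symm
  have key0 : ∀ v r : W, v ≠ r → H.Reachable v r →
      ∃ u, H.Adj v u ∧ H.dist u r + 1 ≤ H.dist v r := by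
    intro v r hne hre
    obtain ⟨p, hp⟩ := hre.exists_walk_length_eq_dist
    cases p with
    | nil => exact absurd rfl hne
    | cons h q =>
      rename_i u
      refine ⟨u, h, ?_⟩
      have := H.dist_le q
      simp only [Walk.length_cons] at hp
      omega
  have key : ∀ v, v ≠ root v → ∃ u, H.Adj v u ∧ root u = root v ∧
      H.dist u (root v) + 1 ≤ H.dist v (root v) := by
    intro v hv
    obtain ⟨u, h1, h2⟩ := key0 v (root v) hv (hreach v)
    refine ⟨u, h1, ?_, h2⟩
    have : H.connectedComponentMk u = H.connectedComponentMk v :=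
      ConnectedComponent.sound h1.symm.reachable
    rw [hroot]; simp only [this]
  choose nxt hadj hrootnxt hdist using key
  have hinj : Function.Injective (fun v => 
      if hv : v = root v then Sum.inl (H.connectedComponentMk v)
      else Sum.inr ⟨s(v, nxt v hv), (hadj v hv)⟩ :
      W → H.ConnectedComponent ⊕ H.edgeSet) := by
    intro v w hvw
    simp only at hvw
    by_cases hv : v = root v <;> by_cases hw : w = root w
    · rw [dif_pos hv, dif_pos hw] at hvw
      have h2 : H.connectedComponentMk v = H.connectedComponentMk w := by
        simpa using hvw
      rw [hv, hw, hroot]; simp only [h2]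
    · rw [dif_pos hv, dif_neg hw] at hvw; simp at hvw
    · rw [dif_neg hv, dif_pos hw] at hvw; simp at hvw
    · rw [dif_neg hv, dif_neg hw] at hvw
      have h2 : s(v, nxt v hv) = s(w, nxt w hw) := by
        exact Subtype.ext_iff.mp (Sum.inr_injective hvw)
      rw [Sym2.eq_iff] at h2
      rcases h2 with ⟨h1, h2⟩ | ⟨h1, h2⟩
      · exact h1
      · exfalso
        have hrw : root w = root v := by rw [← hrootnxt v hv, ← h2]
        have d1 := hdist v hv
        have d2 := hdist w hw
        rw [hrw, ← h1, ← h2] at d2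
        omega
  calc Nat.card W ≤ Nat.card (H.ConnectedComponent ⊕ H.edgeSet) :=
        Nat.card_le_card_of_injective _ hinj
    _ = _ := Nat.card_sum


lemma colorings_ge {V : Type*} [Fintype V] (G : SimpleGraph V)
    (φ : V → Fin 3) (hφ : ∀ u v : V, G.Adj u v → φ u ≠ φ v)
    (a b : Fin 3) (hab : a ≠ b) :
    2 ^ Nat.card ((G.induce {v : V | φ v = a ∨ φ v = b}).ConnectedComponent) ≤
      Nat.card {f : V → Fin 3 // ∀ u v : V, G.Adj u v → f u ≠ f v} := by
  classical
  set S : Set V := {v : V | φ v = a ∨ φ v = b} with hS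
  set H := G.induce S with hH
  set Φ : (H.ConnectedComponent → Bool) → (V → Fin 3) := fun σ v =>
    if h : v ∈ S then
      (if σ (H.connectedComponentMk ⟨v, h⟩) then Equiv.swap a b (φ v) else φ v)
    else φ v with hΦ
  have hswapS : ∀ v (h : v ∈ S), Equiv.swap a b (φ v) = a ∨ Equiv.swap a b (φ v) = b := by
    intro v h
    rcases h with h | h <;> rw [h] <;>
      simp [Equiv.swap_apply_left, Equiv.swap_apply_right]
  have hvalS : ∀ σ v (h : v ∈ S), Φ σ v = a ∨ Φ σ v = b := by
    intro σ v h
    simp only [hΦ, dif_pos h]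
    split
    · exact hswapS v h
    · exact h
  have hproper : ∀ σ u v, G.Adj u v → Φ σ u ≠ Φ σ v := by
    intro σ u v huv
    by_cases hu : u ∈ S <;> by_cases hv : v ∈ S
    · -- same component
      have hadj : H.Adj ⟨u, hu⟩ ⟨v, hv⟩ := by simp [hH, huv]
      have hcomp : H.connectedComponentMk ⟨u, hu⟩ = H.connectedComponentMk ⟨v, hv⟩ :=
        ConnectedComponent.sound hadj.reachable
      simp only [hΦ, dif_pos hu, dif_pos hv, hcomp]
      split
      · exact fun h => hφ u v huv (Equiv.injective _ h)
      · exact hφ u v huv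
    · have h1 := hvalS σ u hu
      have h2 : Φ σ v = φ v := by simp [hΦ, dif_neg hv]
      rw [h2]
      intro h
      rw [h] at h1
      exact hv h1
    · have h1 := hvalS σ v hv
      have h2 : Φ σ u = φ u := by simp [hΦ, dif_neg hu]
      rw [h2]
      intro h
      rw [← h] at h1
      exact hu h1
    · simp only [hΦ, dif_neg hu, dif_neg hv]
      exact hφ u v huv
  have hswapne : ∀ v (h : v ∈ S), Equiv.swap a b (φ v) ≠ φ v := by
    intro v h
    rcases h with h | h <;> rw [h] <;> simp [hab, hab.symm, Equiv.swap_apply_left,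
      Equiv.swap_apply_right]
  have hinj : Function.Injective
      (fun σ : H.ConnectedComponent → Bool => (⟨Φ σ, hproper σ⟩ :
        {f : V → Fin 3 // ∀ u v : V, G.Adj u v → f u ≠ f v})) := by
    intro σ τ h
    have h' : Φ σ = Φ τ := congrArg Subtype.val h
    funext K
    obtain ⟨⟨v, hv⟩, rfl⟩ := K.exists_rep
    have := congrFun h' v
    simp only [hΦ, dif_pos hv] at this
    rcases Bool.eq_false_or_eq_true (σ (H.connectedComponentMk ⟨v, hv⟩)) with h1 | h1 <;>
      rcases Bool.eq_false_or_eq_true (τ (H.connectedComponentMk ⟨v, hv⟩)) with h2 | h2 <;>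
      rw [h1, h2] at this <;> simp at this
    · exact h1.trans h2.symm
    · exact absurd this (hswapne v hv)
    · exact absurd this.symm (hswapne v hv)
    · exact h1.trans h2.symm
  calc 2 ^ Nat.card H.ConnectedComponent
      = Nat.card (H.ConnectedComponent → Bool) := by
        rw [Nat.card_fun]
        simp [Nat.card_eq_fintype_card]
    _ ≤ _ := Nat.card_le_card_of_injective _ hinj


section Aux
variable {V : Type*} (G : SimpleGraph V)

lemma induce_edge_mem (S : Set V) (e : (G.induce S).edgeSet) :
    Sym2.map Subtype.val e.1 ∈ G.edgeSet := by
  obtain ⟨e, he⟩ := e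
  induction e using Sym2.ind with
  | _ x y => simpa using he

/-- The canonical injection from edges of an induced subgraph to edges of `G`. -/
noncomputable def induceEdgeMap (S : Set V) : (G.induce S).edgeSet → G.edgeSet :=
  fun e => ⟨Sym2.map Subtype.val e.1, induce_edge_mem G S e⟩

lemma induceEdgeMap_injective (S : Set V) : Function.Injective (induceEdgeMap G S) := by
  intro e f h
  have h1 : Sym2.map Subtype.val e.1 = Sym2.map Subtype.val f.1 := Subtype.ext_iff.mp h
  exact Subtype.ext (Sym2.map.injective Subtype.val_injective h1)

lemma induceEdgeMap_mem (S : Set V) (e : (G.induce S).edgeSet) :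
    ∀ x ∈ ((induceEdgeMap G S e : G.edgeSet) : Sym2 V), x ∈ S := by
  intro x hx
  rw [induceEdgeMap] at hx
  simp only [Sym2.mem_map] at hx
  obtain ⟨y, _, rfl⟩ := hx
  exact y.2

lemma edge_exists_rep (w : G.edgeSet) : ∃ u v, (w : Sym2 V) = s(u, v) ∧ G.Adj u v := by
  obtain ⟨e, he⟩ := w
  induction e using Sym2.ind with
  | _ u v => exact ⟨u, v, rfl, he⟩

end Aux

lemma nat_card_subtype {V : Type*} [Fintype V] (p : V → Prop) [DecidablePred p] :
    Nat.card {v : V // p v} = ∑ v : V, if p v then 1 else 0 := by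
  rw [Nat.card_eq_fintype_card, Fintype.card_subtype, Finset.card_filter]


lemma vsum_aux {V : Type*} [Fintype V] (φ : V → Fin 3) :
    Nat.card ↥{v : V | φ v = 0 ∨ φ v = 1} + Nat.card ↥{v : V | φ v = 1 ∨ φ v = 2}
      + Nat.card ↥{v : V | φ v = 0 ∨ φ v = 2} = 2 * Fintype.card V := by
  classical
  have h01 := nat_card_subtype (fun v : V => φ v = 0 ∨ φ v = 1)
  have h12 := nat_card_subtype (fun v : V => φ v = 1 ∨ φ v = 2)
  have h02 := nat_card_subtype (fun v : V => φ v = 0 ∨ φ v = 2)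
  have e01 : Nat.card ↥{v : V | φ v = 0 ∨ φ v = 1} = ∑ v : V, if φ v = 0 ∨ φ v = 1 then 1 else 0 := h01
  have e12 : Nat.card ↥{v : V | φ v = 1 ∨ φ v = 2} = ∑ v : V, if φ v = 1 ∨ φ v = 2 then 1 else 0 := h12
  have e02 : Nat.card ↥{v : V | φ v = 0 ∨ φ v = 2} = ∑ v : V, if φ v = 0 ∨ φ v = 2 then 1 else 0 := h02
  rw [e01, e12, e02, ← Finset.sum_add_distrib, ← Finset.sum_add_distrib]
  have hx : ∀ x : Fin 3,
      ((if x = 0 ∨ x = 1 then 1 else 0) + (if x = 1 ∨ x = 2 then 1 else 0)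
        + (if x = 0 ∨ x = 2 then 1 else 0) : ℕ) = 2 := by decide
  calc (∑ v : V, ((if φ v = 0 ∨ φ v = 1 then 1 else 0) + (if φ v = 1 ∨ φ v = 2 then 1 else 0)
        + (if φ v = 0 ∨ φ v = 2 then 1 else 0) : ℕ)) = ∑ _v : V, 2 := by
          refine Finset.sum_congr rfl fun v _ => hx (φ v)
    _ = 2 * Fintype.card V := by simp [Finset.card_univ, Nat.mul_comm]

lemma esum_aux {V : Type*} [Fintype V] (G : SimpleGraph V)
    (φ : V → Fin 3) (hφ : ∀ u v : V, G.Adj u v → φ u ≠ φ v) :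
    Nat.card (G.induce {v : V | φ v = 0 ∨ φ v = 1}).edgeSet
      + Nat.card (G.induce {v : V | φ v = 1 ∨ φ v = 2}).edgeSet
      + Nat.card (G.induce {v : V | φ v = 0 ∨ φ v = 2}).edgeSet ≤ Nat.card G.edgeSet := by
  classical
  set S01 : Set V := {v : V | φ v = 0 ∨ φ v = 1} with hS01
  set S12 : Set V := {v : V | φ v = 1 ∨ φ v = 2} with hS12
  set S02 : Set V := {v : V | φ v = 0 ∨ φ v = 2} with hS02
  have hdisj : ∀ (a b c d : Fin 3),
      (∀ x y : Fin 3, (x = a ∨ x = b) → (y = a ∨ y = b) →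
        (x = c ∨ x = d) → (y = c ∨ y = d) → x = y) →
      ∀ (w : G.edgeSet), (∀ x ∈ (w : Sym2 V), φ x = a ∨ φ x = b) →
        (∀ x ∈ (w : Sym2 V), φ x = c ∨ φ x = d) → False := by
    intro a b c d habcd w h1 h2
    obtain ⟨u, v, hw, hadj⟩ := edge_exists_rep G w
    rw [hw] at h1 h2
    exact hφ u v hadj (habcd (φ u) (φ v) (h1 u (Sym2.mem_mk_left u v))
      (h1 v (Sym2.mem_mk_right u v)) (h2 u (Sym2.mem_mk_left u v))
      (h2 v (Sym2.mem_mk_right u v)))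
  have key1 : ∀ x y : Fin 3, (x = 0 ∨ x = 1) → (y = 0 ∨ y = 1) →
      (x = 1 ∨ x = 2) → (y = 1 ∨ y = 2) → x = y := by decide
  have key2 : ∀ x y : Fin 3, (x = 0 ∨ x = 1) → (y = 0 ∨ y = 1) →
      (x = 0 ∨ x = 2) → (y = 0 ∨ y = 2) → x = y := by decide
  have key3 : ∀ x y : Fin 3, (x = 1 ∨ x = 2) → (y = 1 ∨ y = 2) →
      (x = 0 ∨ x = 2) → (y = 0 ∨ y = 2) → x = y := by decide
  set F : (G.induce S01).edgeSet ⊕ (G.induce S12).edgeSet ⊕ (G.induce S02).edgeSet →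
      G.edgeSet :=
    Sum.elim (induceEdgeMap G S01) (Sum.elim (induceEdgeMap G S12) (induceEdgeMap G S02))
    with hF
  have hmem01 := induceEdgeMap_mem G S01
  have hmem12 := induceEdgeMap_mem G S12
  have hmem02 := induceEdgeMap_mem G S02
  have hFinj : Function.Injective F := by
    rintro (e | e | e) (f | f | f) h <;> simp only [hF, Sum.elim_inl, Sum.elim_inr] at h
    · exact congrArg Sum.inl (induceEdgeMap_injective G S01 h)
    · exact (hdisj 0 1 1 2 key1 (induceEdgeMap G S01 e) (fun x hx => hmem01 e x hx)
        (fun x hx => hmem12 f x (by rw [← h]; exact hx))).elim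
    · exact (hdisj 0 1 0 2 key2 (induceEdgeMap G S01 e) (fun x hx => hmem01 e x hx)
        (fun x hx => hmem02 f x (by rw [← h]; exact hx))).elim
    · exact (hdisj 0 1 1 2 key1 (induceEdgeMap G S12 e)
        (fun x hx => hmem01 f x (by rw [← h]; exact hx))
        (fun x hx => hmem12 e x hx)).elim
    · exact congrArg Sum.inr (congrArg Sum.inl (induceEdgeMap_injective G S12 h))
    · exact (hdisj 1 2 0 2 key3 (induceEdgeMap G S12 e) (fun x hx => hmem12 e x hx)
        (fun x hx => hmem02 f x (by rw [← h]; exact hx))).elim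
    · exact (hdisj 0 1 0 2 key2 (induceEdgeMap G S02 e)
        (fun x hx => hmem01 f x (by rw [← h]; exact hx))
        (fun x hx => hmem02 e x hx)).elim
    · exact (hdisj 1 2 0 2 key3 (induceEdgeMap G S02 e)
        (fun x hx => hmem12 f x (by rw [← h]; exact hx))
        (fun x hx => hmem02 e x hx)).elim
    · exact congrArg Sum.inr (congrArg Sum.inr (induceEdgeMap_injective G S02 h))
  calc Nat.card (G.induce S01).edgeSet + Nat.card (G.induce S12).edgeSet
        + Nat.card (G.induce S02).edgeSet
      = Nat.card ((G.induce S01).edgeSet ⊕ (G.induce S12).edgeSet ⊕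
          (G.induce S02).edgeSet) := by
        rw [Nat.card_sum, Nat.card_sum]; ring
    _ ≤ Nat.card G.edgeSet := Nat.card_le_card_of_injective F hFinj

/-- For a connected plane triangle-free 3-colorable graph (plane structure given
by the face counts `s` together with Euler's formula and edge–face double
counting): `max(c₁₂, c₂₃, c₁₃) ≥ (s⁺ + 8)/6`, and `G` has at least
`2^{(s⁺+8)/6}` proper 3-colorings, where `s⁺ = Σ_{i≥5} (i-4)sᵢ`. -/
theorem many_colorings_of_plane_triangle_free {V : Type*} [Fintype V]
    (G : SimpleGraph V) (hconn : G.Connected) (htf : G.CliqueFree 3)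
    (hn : 3 ≤ Fintype.card V)
    (m : ℕ) (s : ℕ → ℕ) (h4 : ∀ i < 4, s i = 0)
    (heuler : Nat.card G.edgeSet + 2 = Fintype.card V + ∑ i ∈ Finset.range m, s i)
    (hdouble : 2 * Nat.card G.edgeSet = ∑ i ∈ Finset.range m, i * s i)
    (φ : V → Fin 3) (hφ : ∀ u v : V, G.Adj u v → φ u ≠ φ v) :
    (((∑ i ∈ Finset.range m, ((i : ℝ) - 4) * (s i : ℝ)) + 8) / 6 ≤
        (max (max
          (Nat.card ((G.induce {v : V | φ v = 0 ∨ φ v = 1}).ConnectedComponent))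
          (Nat.card ((G.induce {v : V | φ v = 1 ∨ φ v = 2}).ConnectedComponent)))
          (Nat.card ((G.induce {v : V | φ v = 0 ∨ φ v = 2}).ConnectedComponent)) : ℝ)) ∧
    (2 : ℝ) ^ (((∑ i ∈ Finset.range m, ((i : ℝ) - 4) * (s i : ℝ)) + 8) / 6) ≤
      (Nat.card {f : V → Fin 3 // ∀ u v : V, G.Adj u v → f u ≠ f v} : ℝ) := by
  classical
  -- abbreviations
  set c01 : ℕ := Nat.card ((G.induce {v : V | φ v = 0 ∨ φ v = 1}).ConnectedComponent) with hc01
  set c12 : ℕ := Nat.card ((G.induce {v : V | φ v = 1 ∨ φ v = 2}).ConnectedComponent) with hc12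
  set c02 : ℕ := Nat.card ((G.induce {v : V | φ v = 0 ∨ φ v = 2}).ConnectedComponent) with hc02
  set sreal : ℝ := ∑ i ∈ Finset.range m, ((i : ℝ) - 4) * (s i : ℝ) with hsreal
  set n : ℕ := Fintype.card V with hn'
  set E : ℕ := Nat.card G.edgeSet with hE
  -- counting per pair
  have h1 := card_le_comp_add_edges (G.induce {v : V | φ v = 0 ∨ φ v = 1})
  have h2 := card_le_comp_add_edges (G.induce {v : V | φ v = 1 ∨ φ v = 2})
  have h3 := card_le_comp_add_edges (G.induce {v : V | φ v = 0 ∨ φ v = 2})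
  have hvsum := vsum_aux φ
  have hesum := esum_aux G φ hφ
  have hail : 2 * n ≤ (c01 + c12 + c02) + E := by
    rw [hc01, hc12, hc02, hE, hn']
    omega
  -- real arithmetic for s⁺
  have hsplit : sreal = ((∑ i ∈ Finset.range m, i * s i : ℕ) : ℝ)
      - 4 * ((∑ i ∈ Finset.range m, s i : ℕ) : ℝ) := by
    rw [hsreal]
    push_cast
    rw [Finset.mul_sum, ← Finset.sum_sub_distrib]
    exact Finset.sum_congr rfl fun i _ => by ring
  have he' : (E : ℝ) + 2 = (n : ℝ) + ((∑ i ∈ Finset.range m, s i : ℕ) : ℝ) := by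
    exact_mod_cast congrArg (Nat.cast : ℕ → ℝ) heuler
  have hd' : 2 * (E : ℝ) = ((∑ i ∈ Finset.range m, i * s i : ℕ) : ℝ) := by
    exact_mod_cast congrArg (Nat.cast : ℕ → ℝ) hdouble
  have hkey : 2 * (n : ℝ) ≤ ((c01 : ℝ) + c12 + c02) + E := by exact_mod_cast hail
  set Mn : ℕ := max (max c01 c12) c02 with hMn
  have m1 : (c01 : ℝ) ≤ (Mn : ℝ) := by exact_mod_cast le_trans (le_max_left _ _) (le_max_left _ _)
  have m2 : (c12 : ℝ) ≤ (Mn : ℝ) := by exact_mod_cast le_trans (le_max_right _ _) (le_max_left _ _)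
  have m3 : (c02 : ℝ) ≤ (Mn : ℝ) := by exact_mod_cast le_max_right _ _
  have hexp : (sreal + 8) / 6 ≤ (Mn : ℝ) := by linarith
  constructor
  · have : ((Mn : ℕ) : ℝ) = max (max (c01 : ℝ) (c12 : ℝ)) (c02 : ℝ) := by
      rw [hMn]; push_cast; rfl
    rw [← this] at *
    exact hexp
  · have hMcase : Mn = c01 ∨ Mn = c12 ∨ Mn = c02 := by omega
    calc (2 : ℝ) ^ ((sreal + 8) / 6)
        ≤ (2 : ℝ) ^ ((Mn : ℕ) : ℝ) := Real.rpow_le_rpow_of_exponent_le one_le_two hexp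
      _ = (((2 ^ Mn : ℕ) : ℕ) : ℝ) := by rw [Real.rpow_natCast]; push_cast; ring
      _ ≤ (Nat.card {f : V → Fin 3 // ∀ u v : V, G.Adj u v → f u ≠ f v} : ℝ) := by
          rcases hMcase with h | h | h <;> rw [h]
          · rw [hc01]
            exact_mod_cast colorings_ge G φ hφ 0 1 (by decide)
          · rw [hc12]
            exact_mod_cast colorings_ge G φ hφ 1 2 (by decide)
          · rw [hc02]
            exact_mod_cast colorings_ge G φ hφ 0 2 (by decide)
end
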